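/- Localization soundness for optimal repairs (first direction): let B_r be weakly-reachable closure of B ⊆ D. If R is a Pareto-optimal repair of the prioritized KB (D, Cons, ≻), then R ∩ B_r is a Pareto-optimal repair of the restricted prioritized KB (B_r, Cons restricted to subsets of B_r, ≻ restricted to B_r). -/

import Mathlib

variable {α : Type*}

def DownwardClosed (Cons : Set (Set α)) : Prop :=
  ∀ S ∈ Cons, ∀ S' ⊆ S, S' ∈ Cons

def IsConflict (D : Set α) (Cons : Set (Set α)) (C : Set α) : Prop :=
  C ⊆ D ∧ C ∉ Cons ∧ ∀ C' ⊂ C, C' ∈ Cons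

def IsRepair (D : Set α) (Cons : Set (Set α)) (R : Set α) : Prop :=
  R ⊆ D ∧ R ∈ Cons ∧ ∀ S, S ⊆ D → S ∈ Cons → R ⊆ S → S = R

def Acyclic (pr : α → α → Prop) : Prop :=
  ∀ a, ¬ Relation.TransGen pr a a

def PriorityRel (D : Set α) (Cons : Set (Set α)) (pr : α → α → Prop) : Prop :=
  Acyclic pr ∧ ∀ a b, pr a b → ∃ C, IsConflict D Cons C ∧ a ∈ C ∧ b ∈ C

def ParetoImp (Cons : Set (Set α)) (pr : α → α → Prop) (D R B : Set α) : Prop :=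
  B ⊆ D ∧ B ∈ Cons ∧ ∃ β ∈ B \ R, ∀ a ∈ R \ B, pr β a

def GlobalImp (Cons : Set (Set α)) (pr : α → α → Prop) (D R B : Set α) : Prop :=
  B ⊆ D ∧ B ∈ Cons ∧ B ≠ R ∧ ∀ a ∈ R \ B, ∃ β ∈ B \ R, pr β a

def ParetoOpt (Cons : Set (Set α)) (pr : α → α → Prop) (D R : Set α) : Prop :=
  IsRepair D Cons R ∧ ∀ B, ¬ ParetoImp Cons pr D R B

def GlobalOpt (Cons : Set (Set α)) (pr : α → α → Prop) (D R : Set α) : Prop :=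
  IsRepair D Cons R ∧ ∀ B, ¬ GlobalImp Cons pr D R B

def TotalPrio (D : Set α) (Cons : Set (Set α)) (pr : α → α → Prop) : Prop :=
  ∀ a b, a ≠ b → (∃ C, IsConflict D Cons C ∧ a ∈ C ∧ b ∈ C) → pr a b ∨ pr b a

def IsCompletion (D : Set α) (Cons : Set (Set α)) (pr pr' : α → α → Prop) : Prop :=
  PriorityRel D Cons pr' ∧ TotalPrio D Cons pr' ∧ ∀ a b, pr a b → pr' a b

def ComplOpt (Cons : Set (Set α)) (pr : α → α → Prop) (D R : Set α) : Prop :=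
  ∃ pr', IsCompletion D Cons pr pr' ∧ GlobalOpt Cons pr' D R

/-- Weak reachability: the least superset of `B` closed under the rule: if β is
reachable, C is a conflict containing β, and some γ ∈ C \ {β} satisfies ¬(β ≻ γ),
then every element of C is reachable. -/
inductive WeakReach (Confl : Set (Set α)) (pr : α → α → Prop) (B : Set α) : α → Prop
  | base {a : α} : a ∈ B → WeakReach Confl pr B a
  | step {b a : α} {C : Set α} : WeakReach Confl pr B b → C ∈ Confl → b ∈ C →
      (∃ γ ∈ C \ {b}, ¬ pr b γ) → a ∈ C → WeakReach Confl pr B a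

lemma exists_conflict_of_inconsistent (D : Set α) (hD : D.Finite) (Cons : Set (Set α))
    (T : Set α) (hT : T ⊆ D) (hTc : T ∉ Cons) :
    ∃ C, C ⊆ T ∧ IsConflict D Cons C := by
  have hfin : {C : Set α | C ⊆ T ∧ C ∉ Cons}.Finite :=
    ((hD.subset hT).finite_subsets).subset (fun C hC => hC.1)
  obtain ⟨C, hC, hmin'⟩ := Set.Finite.exists_minimalFor (id)
    _ hfin ⟨T, subset_rfl, hTc⟩
  have hmin : ∀ C' ∈ {C : Set α | C ⊆ T ∧ C ∉ Cons}, C' ⊆ C → C = C' :=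
    fun C' h1 h2 => Set.Subset.antisymm (hmin' h1 h2) h2
  refine ⟨C, hC.1, hC.1.trans hT, hC.2, fun C' hC' => ?_⟩
  by_contra hC'c
  have := hmin C' ⟨hC'.subset.trans hC.1, hC'c⟩ hC'.subset
  exact hC'.ne (this.symm)

lemma key_lemma (D : Set α) (hD : D.Finite) (Cons : Set (Set α)) (hdc : DownwardClosed Cons)
    (pr : α → α → Prop) (R : Set α) (hR : ParetoOpt Cons pr D R)
    (β : α) (hβD : β ∈ D) (hβR : β ∉ R) (hβc : {β} ∈ Cons)
    (T : Set α) (hTD : T ⊆ D) (hβT : β ∈ T) (hTR : T \ {β} ⊆ R)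
    (hdom : ∀ a ∈ R \ T, pr β a) (hTc : T ∉ Cons) :
    ∃ C, IsConflict D Cons C ∧ C ⊆ T ∧ β ∈ C ∧ ∃ γ ∈ C \ {β}, ¬ pr β γ := by
  by_contra h
  push_neg at h
  -- every conflict inside T containing β is fully dominated by β
  set X : Set α := {a | ∃ C, IsConflict D Cons C ∧ C ⊆ T ∧ a ∈ C ∧ a ≠ β} with hX
  set B' : Set α := insert β (T \ X) with hB'
  have hconfβ : ∀ C, IsConflict D Cons C → C ⊆ T → β ∈ C := by
    intro C hC hCT
    by_contra hβC
    have : C ⊆ R := fun a ha => hTR ⟨hCT ha, fun h' => hβC (h' ▸ ha)⟩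
    exact hC.2.1 (hdc R hR.1.2.1 C this)
  have hB'c : B' ∈ Cons := by
    by_contra hB'c
    obtain ⟨C, hCB', hC⟩ := exists_conflict_of_inconsistent D hD Cons B'
      (by rw [hB']; exact Set.insert_subset hβD (fun a ha => hTD ha.1)) hB'c
    have hCT : C ⊆ T := by
      intro a ha
      rcases hCB' ha with rfl | ha'
      · exact hβT
      · exact ha'.1
    have : C ⊆ {β} := by
      intro a ha
      by_contra haβ
      have haX : a ∈ X := ⟨C, hC, hCT, ha, fun h' => haβ h'⟩
      rcases hCB' ha with rfl | ha'
      · exact haβ rfl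
      · exact ha'.2 haX
    exact hC.2.1 (hdc {β} hβc C this)
  refine hR.2 B' ⟨?_, hB'c, β, ⟨Set.mem_insert _ _, hβR⟩, ?_⟩
  · rw [hB']; exact Set.insert_subset hβD (fun a ha => hTD ha.1)
  · intro a ha
    have haβ : a ≠ β := fun h' => hβR (h' ▸ ha.1)
    by_cases haT : a ∈ T
    · have haX : a ∈ X := by
        by_contra haX
        exact ha.2 (Set.mem_insert_of_mem _ ⟨haT, haX⟩)
      obtain ⟨C, hC, hCT, haC, haβ'⟩ := haX
      exact h C hC hCT (hconfβ C hC hCT) a ⟨haC, haβ'⟩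
    · exact hdom a ⟨ha.1, haT⟩

/-- Localization soundness (first direction): if `R` is a Pareto-optimal repair of the
prioritized KB `(D, Cons, ≻)` and `B_r` is the weak reachability closure of `B ⊆ D`,
then `R ∩ B_r` is a Pareto-optimal repair of the KB restricted to `B_r`. -/
theorem paretoOpt_localization_sound
    (D : Set α) (hD : D.Finite) (Cons : Set (Set α))
    (hdc : DownwardClosed Cons) (hempty : (∅ : Set α) ∈ Cons)
    (pr : α → α → Prop) (hpr : PriorityRel D Cons pr)
    (B : Set α) (hB : B ⊆ D) (R : Set α)
    (hR : ParetoOpt Cons pr D R) :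
    ParetoOpt (fun S => S ∈ Cons ∧ S ⊆ {a | WeakReach {C | IsConflict D Cons C} pr B a})
      (fun a b => pr a b ∧ a ∈ {x | WeakReach {C | IsConflict D Cons C} pr B x}
        ∧ b ∈ {x | WeakReach {C | IsConflict D Cons C} pr B x})
      {a | WeakReach {C | IsConflict D Cons C} pr B a}
      (R ∩ {a | WeakReach {C | IsConflict D Cons C} pr B a}) := by
  set Br : Set α := {a | WeakReach {C | IsConflict D Cons C} pr B a} with hBr
  have hBrD : Br ⊆ D := by
    intro a ha
    induction ha with
    | base h => exact hB h
    | step _ hC _ _ haC ih => exact hC.1 haC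
  -- main workhorse: a conflict found by key_lemma that lies inside Br
  have main : ∀ (β : α), β ∈ Br → β ∉ R → {β} ∈ Cons →
      ∀ (T : Set α), T ⊆ D → β ∈ T → T \ {β} ⊆ R →
      (∀ a ∈ R \ T, pr β a) → T ∉ Cons →
      ∃ C, IsConflict D Cons C ∧ C ⊆ T ∧ β ∈ C ∧ C ⊆ Br := by
    intro β hβBr hβR hβc T hTD hβT hTR hdom hTc
    obtain ⟨C, hC, hCT, hβC, hγ⟩ := key_lemma D hD Cons hdc pr R hR β (hBrD hβBr)
      hβR hβc T hTD hβT hTR hdom hTc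
    exact ⟨C, hC, hCT, hβC, fun a ha => WeakReach.step hβBr hC hβC hγ ha⟩
  constructor
  · refine ⟨Set.inter_subset_right, ⟨hdc R hR.1.2.1 _ Set.inter_subset_left,
      Set.inter_subset_right⟩, ?_⟩
    -- maximality
    intro S hSBr hS hRS
    refine Set.Subset.antisymm (fun β hβS => ?_) hRS
    by_contra hβ
    have hβBr : β ∈ Br := hSBr hβS
    have hβR : β ∉ R := fun h => hβ ⟨h, hβBr⟩
    have hins : insert β R ∉ Cons := by
      intro hc
      exact hβR (hR.1.2.2 (insert β R) (Set.insert_subset (hBrD hβBr) hR.1.1) hc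
        (Set.subset_insert _ _) ▸ Set.mem_insert β R)
    obtain ⟨C, hC, hCT, hβC, hCBr⟩ := main β hβBr hβR
      (hdc S hS.1 {β} (Set.singleton_subset_iff.2 hβS))
      (insert β R) (Set.insert_subset (hBrD hβBr) hR.1.1) (Set.mem_insert _ _)
      (fun a ha => ha.1.resolve_left (fun h => ha.2 h))
      (fun a ha => absurd (Set.mem_insert_of_mem _ ha.1) ha.2) hins
    have hCS : C ⊆ S := by
      intro a ha
      rcases hCT ha with rfl | haR
      · exact hβS
      · exact hRS ⟨haR, hCBr ha⟩
    exact hC.2.1 (hdc S hS.1 C hCS)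
  · -- no Pareto improvement in restricted KB
    rintro B' ⟨hB'Br, ⟨hB'c, hB'Br'⟩, β, ⟨hβB', hβ⟩, himp⟩
    have hβBr : β ∈ Br := hB'Br hβB'
    have hβR : β ∉ R := fun h => hβ ⟨h, hβBr⟩
    set T : Set α := insert β (R \ ((R ∩ Br) \ B')) with hT
    have hTD : T ⊆ D := Set.insert_subset (hBrD hβBr) (fun a ha => hR.1.1 ha.1)
    have hTR : T \ {β} ⊆ R := by
      rintro a ⟨ha, haβ⟩
      rcases ha with rfl | ha'
      · exact absurd rfl haβ
      · exact ha'.1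
    have hdom : ∀ a ∈ R \ T, pr β a := by
      rintro a ⟨haR, haT⟩
      have : a ∈ (R ∩ Br) \ B' := by
        by_contra h'
        exact haT (Set.mem_insert_of_mem _ ⟨haR, h'⟩)
      exact (himp a this).1
    have hTc : T ∉ Cons := by
      intro hc
      exact hR.2 T ⟨hTD, hc, β, ⟨Set.mem_insert _ _, hβR⟩, hdom⟩
    obtain ⟨C, hC, hCT, hβC, hCBr⟩ := main β hβBr hβR (hdc B' hB'c {β}
      (Set.singleton_subset_iff.2 hβB')) T hTD (Set.mem_insert _ _) hTR hdom hTc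
    have hCB' : C ⊆ B' := by
      intro a ha
      rcases hCT ha with rfl | ha'
      · exact hβB'
      · by_contra haB'
        exact ha'.2 ⟨⟨ha'.1, hCBr ha⟩, haB'⟩
    exact hC.2.1 (hdc B' hB'c C hCB')
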